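/- For all compact pmm spaces 𝒳 = (X, o_X, μ_X) and 𝒴 = (Y, o_Y, μ_Y), the infimum in the definition of the Gromov-Hausdorff-Prokhorov distance dc(𝒳,𝒴) is attained: there exist a metric space Z and isometric embeddings f : X → Z and g : Y → Z with max(d(f(o_X), g(o_Y)), dH(f(X), g(Y)), dP(f_*μ_X, g_*μ_Y)) = dc(𝒳,𝒴). -/

import Mathlib

open MeasureTheory Topology Filter

noncomputable section

/-- Prokhorov distance between finite Borel measures on a metric space. -/
def prokhorovDist {Z : Type*} [MetricSpace Z] [MeasurableSpace Z]
    (μ ν : Measure Z) : ℝ :=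
  sInf {ε : ℝ | 0 < ε ∧ ∀ A : Set Z, IsClosed A →
    μ A ≤ ν (Metric.cthickening ε A) + ENNReal.ofReal ε ∧
    ν A ≤ μ (Metric.cthickening ε A) + ENNReal.ofReal ε}

/-- A pointed measured metric space: a metric space with a distinguished point and a Borel
measure. -/
structure PMM : Type 1 where
  carrier : Type
  metric : MetricSpace carrier
  basepoint : carrier
  meas : @Measure carrier
    (@borel carrier metric.toPseudoMetricSpace.toUniformSpace.toTopologicalSpace)

attribute [instance] PMM.metric

instance PMM.instMeasurableSpace (𝒳 : PMM) : MeasurableSpace 𝒳.carrier := borel 𝒳.carrier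

instance PMM.instBorelSpace (𝒳 : PMM) : BorelSpace 𝒳.carrier := ⟨rfl⟩

/-- A pmm space is boundedly compact if every closed ball is compact and has finite measure. -/
def PMM.BoundedlyCompact (𝒳 : PMM) : Prop :=
  (∀ (x : 𝒳.carrier) (r : ℝ), IsCompact (Metric.closedBall x r)) ∧
  (∀ (x : 𝒳.carrier) (r : ℝ), 𝒳.meas (Metric.closedBall x r) ≠ ⊤)

/-- A pmm space is compact if its carrier is compact and its measure is finite. -/
def PMM.IsCompactPMM (𝒳 : PMM) : Prop :=
  CompactSpace 𝒳.carrier ∧ 𝒳.meas Set.univ ≠ ⊤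

/-- A pair of maps of two pmm spaces into a common metric space. -/
structure GHPEmbedding (𝒳 𝒴 : PMM) : Type 1 where
  Z : Type
  mZ : MetricSpace Z
  f : 𝒳.carrier → Z
  g : 𝒴.carrier → Z

attribute [instance] GHPEmbedding.mZ

/-- Both maps of a `GHPEmbedding` are isometric embeddings. -/
def GHPEmbedding.IsIsometric {𝒳 𝒴 : PMM} (e : GHPEmbedding 𝒳 𝒴) : Prop :=
  Isometry e.f ∧ Isometry e.g

/-- The quantity `max(d(f o_X, g o_Y), dH(f(X), g(Y)), dP(f_*μ_X, g_*μ_Y))` associated to a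
pair of embeddings into a common space. -/
def GHPEmbedding.value {𝒳 𝒴 : PMM} (e : GHPEmbedding 𝒳 𝒴) : ℝ :=
  letI : MeasurableSpace e.Z := borel e.Z
  max (dist (e.f 𝒳.basepoint) (e.g 𝒴.basepoint))
    (max (Metric.hausdorffDist (Set.range e.f) (Set.range e.g))
      (prokhorovDist (𝒳.meas.map e.f) (𝒴.meas.map e.g)))

/-- The Gromov-Hausdorff-Prokhorov distance of compact pmm spaces. -/
def cGHP (𝒳 𝒴 : PMM) : ℝ :=
  sInf {x : ℝ | ∃ e : GHPEmbedding 𝒳 𝒴, e.IsIsometric ∧ x = e.value}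

/-- A pmm-subspace of a pmm space `𝒳`: a subset containing the basepoint together with a
measure `≤ 𝒳.meas` supported on the subset. -/
structure SubPMM (𝒳 : PMM) where
  set : Set 𝒳.carrier
  root_mem : 𝒳.basepoint ∈ set
  meas : Measure 𝒳.carrier
  meas_le : meas ≤ 𝒳.meas
  supported : meas setᶜ = 0

/-- The pmm space associated to a pmm-subspace. -/
def SubPMM.toPMM {𝒳 : PMM} (S : SubPMM 𝒳) : PMM where
  carrier := ↥S.set
  metric := inferInstance
  basepoint := ⟨𝒳.basepoint, S.root_mem⟩
  meas := @Measure.comap ↥S.set 𝒳.carrier (borel ↥S.set) inferInstance Subtype.val S.meas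

/-- The pmm-subspace ordering: inclusion of sets and inequality of measures. -/
instance {𝒳 : PMM} : LE (SubPMM 𝒳) :=
  ⟨fun S T => S.set ⊆ T.set ∧ S.meas ≤ T.meas⟩

/-- Compactness of a pmm-subspace. -/
def SubPMM.IsCompactSub {𝒳 : PMM} (S : SubPMM 𝒳) : Prop :=
  IsCompact S.set ∧ S.meas Set.univ ≠ ⊤

/-- The closed ball of radius `r` around the basepoint, as a pmm-subspace (for `r ≥ 0` the
underlying set is exactly the closed ball; the basepoint is inserted so that the definition
makes sense for all `r`). -/
def PMM.ballSub (𝒳 : PMM) (r : ℝ) : SubPMM 𝒳 where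
  set := insert 𝒳.basepoint (Metric.closedBall 𝒳.basepoint r)
  root_mem := Set.mem_insert _ _
  meas := 𝒳.meas.restrict (insert 𝒳.basepoint (Metric.closedBall 𝒳.basepoint r))
  meas_le := Measure.restrict_le_self
  supported := by
    rw [Measure.restrict_apply ((measurableSet_closedBall.insert 𝒳.basepoint).compl),
      Set.compl_inter_self]
    simp

/-- The quantity `a(ε, r; 𝒳, 𝒴)`. -/
def aFun (ε r : ℝ) (𝒳 𝒴 : PMM) : ℝ :=
  sInf {x : ℝ | ∃ Y' : SubPMM 𝒴, Y'.IsCompactSub ∧ 𝒴.ballSub (r - ε) ≤ Y' ∧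
    x = cGHP ((𝒳.ballSub r).toPMM) Y'.toPMM}

/-- The quantity `a_ε(𝒳, 𝒴) = a(ε, 1/ε; 𝒳, 𝒴)`. -/
def aEps (ε : ℝ) (𝒳 𝒴 : PMM) : ℝ := aFun ε (1 / ε) 𝒳 𝒴

/-- The Gromov-Hausdorff-Prokhorov distance of boundedly compact pmm spaces
(with `inf ∅ = 1`). -/
def GHP (𝒳 𝒴 : PMM) : ℝ :=
  sInf (insert 1 {ε : ℝ | ε ∈ Set.Ioc (0 : ℝ) 1 ∧ max (aEps ε 𝒳 𝒴) (aEps ε 𝒴 𝒳) < ε / 2})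

/-- Two pmm spaces are GHP-isometric if there is a root-preserving measure-preserving
surjective isometry between them. -/
def GHPIsometric (𝒳 𝒴 : PMM) : Prop :=
  ∃ ρ : 𝒳.carrier → 𝒴.carrier, Isometry ρ ∧ Function.Surjective ρ ∧
    ρ 𝒳.basepoint = 𝒴.basepoint ∧ 𝒳.meas.map ρ = 𝒴.meas

/-- `r` is a continuity radius of a pmm space. -/
def PMM.ContinuityRadius (𝒳 : PMM) (r : ℝ) : Prop :=
  0 < r ∧ Metric.closedBall 𝒳.basepoint r = closure (Metric.ball 𝒳.basepoint r) ∧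
    𝒳.meas (Metric.closedBall 𝒳.basepoint r \ Metric.ball 𝒳.basepoint r) = 0

open scoped BoundedContinuousFunction

namespace CGHPAux

open Metric Set

/-! ### Auxiliary development for `cGHP_attained` -/

/-- Equality form of `GHPEmbedding.value`. -/
lemma value_eq' {𝒳 𝒴 : PMM} (e : GHPEmbedding 𝒳 𝒴) :
    e.value = max (dist (e.f 𝒳.basepoint) (e.g 𝒴.basepoint))
      (max (Metric.hausdorffDist (Set.range e.f) (Set.range e.g))
        (@prokhorovDist e.Z _ (borel e.Z)
          (@Measure.map _ _ _ (borel e.Z) e.f 𝒳.meas)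
          (@Measure.map _ _ _ (borel e.Z) e.g 𝒴.meas))) := rfl

lemma value_nonneg {𝒳 𝒴 : PMM} (e : GHPEmbedding 𝒳 𝒴) : 0 ≤ e.value := by
  rw [value_eq']
  exact le_trans dist_nonneg (le_max_left _ _)

/-- Admissibility of a cross-distance function. -/
def Adm (𝒳 𝒴 : PMM) (δ : 𝒳.carrier × 𝒴.carrier → ℝ) (M : ℝ) : Prop :=
  (∀ p, 0 ≤ δ p ∧ δ p ≤ M) ∧
  (∀ x x' y, |δ (x, y) - δ (x', y)| ≤ dist x x') ∧
  (∀ x y y', |δ (x, y) - δ (x, y')| ≤ dist y y') ∧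
  (∀ x x' y, dist x x' ≤ δ (x, y) + δ (x', y)) ∧
  (∀ x y y', dist y y' ≤ δ (x, y) + δ (x, y'))

variable {𝒳 𝒴 : PMM} {δ : 𝒳.carrier × 𝒴.carrier → ℝ} {M : ℝ}

lemma Adm.M_nonneg (hδ : Adm 𝒳 𝒴 δ M) : 0 ≤ M :=
  le_trans (hδ.1 (𝒳.basepoint, 𝒴.basepoint)).1 (hδ.1 (𝒳.basepoint, 𝒴.basepoint)).2

/-- The Kuratowski-type function associated to a point of `𝒳`. -/
def kurFraw (δ : 𝒳.carrier × 𝒴.carrier → ℝ) (x : 𝒳.carrier) :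
    𝒳.carrier ⊕ 𝒴.carrier → ℝ :=
  Sum.elim (fun x' => dist x x') (fun y => δ (x, y))

/-- The Kuratowski-type function associated to a point of `𝒴`. -/
def kurGraw (δ : 𝒳.carrier × 𝒴.carrier → ℝ) (y : 𝒴.carrier) :
    𝒳.carrier ⊕ 𝒴.carrier → ℝ :=
  Sum.elim (fun x => δ (x, y)) (fun y' => dist y y')

lemma kurFraw_cont (hδ : Adm 𝒳 𝒴 δ M) (x : 𝒳.carrier) : Continuous (kurFraw δ x) := by
  refine Continuous.sumElim (continuous_const.dist continuous_id) ?_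
  have : LipschitzWith 1 (fun y => δ (x, y)) := by
    refine LipschitzWith.of_dist_le_mul fun y y' => ?_
    rw [NNReal.coe_one, one_mul, Real.dist_eq]
    exact hδ.2.2.1 x y y'
  exact this.continuous

lemma kurGraw_cont (hδ : Adm 𝒳 𝒴 δ M) (y : 𝒴.carrier) : Continuous (kurGraw δ y) := by
  refine Continuous.sumElim ?_ (continuous_const.dist continuous_id)
  have : LipschitzWith 1 (fun x => δ (x, y)) := by
    refine LipschitzWith.of_dist_le_mul fun x x' => ?_
    rw [NNReal.coe_one, one_mul, Real.dist_eq]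
    exact hδ.2.1 x x' y
  exact this.continuous

lemma kurFraw_bound (h𝒳 : 𝒳.IsCompactPMM) (hδ : Adm 𝒳 𝒴 δ M) (x : 𝒳.carrier)
    (w : 𝒳.carrier ⊕ 𝒴.carrier) :
    ‖kurFraw δ x w‖ ≤ Metric.diam (Set.univ : Set 𝒳.carrier)
      + Metric.diam (Set.univ : Set 𝒴.carrier) + M := by
  haveI : CompactSpace 𝒳.carrier := h𝒳.1
  have hM0 : 0 ≤ M := hδ.M_nonneg
  have hdX : 0 ≤ Metric.diam (Set.univ : Set 𝒳.carrier) := Metric.diam_nonneg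
  have hdY : 0 ≤ Metric.diam (Set.univ : Set 𝒴.carrier) := Metric.diam_nonneg
  rcases w with x' | y
  · have : dist x x' ≤ Metric.diam (Set.univ : Set 𝒳.carrier) :=
      Metric.dist_le_diam_of_mem isCompact_univ.isBounded (Set.mem_univ _) (Set.mem_univ _)
    show ‖dist x x'‖ ≤ _
    rw [Real.norm_eq_abs, abs_of_nonneg dist_nonneg]
    linarith
  · show ‖δ (x, y)‖ ≤ _
    rw [Real.norm_eq_abs, abs_of_nonneg (hδ.1 (x, y)).1]
    linarith [(hδ.1 (x, y)).2]

lemma kurGraw_bound (h𝒴 : 𝒴.IsCompactPMM) (hδ : Adm 𝒳 𝒴 δ M) (y : 𝒴.carrier)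
    (w : 𝒳.carrier ⊕ 𝒴.carrier) :
    ‖kurGraw δ y w‖ ≤ Metric.diam (Set.univ : Set 𝒳.carrier)
      + Metric.diam (Set.univ : Set 𝒴.carrier) + M := by
  haveI : CompactSpace 𝒴.carrier := h𝒴.1
  have hM0 : 0 ≤ M := hδ.M_nonneg
  have hdX : 0 ≤ Metric.diam (Set.univ : Set 𝒳.carrier) := Metric.diam_nonneg
  have hdY : 0 ≤ Metric.diam (Set.univ : Set 𝒴.carrier) := Metric.diam_nonneg
  rcases w with x | y'
  · show ‖δ (x, y)‖ ≤ _
    rw [Real.norm_eq_abs, abs_of_nonneg (hδ.1 (x, y)).1]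
    linarith [(hδ.1 (x, y)).2]
  · have : dist y y' ≤ Metric.diam (Set.univ : Set 𝒴.carrier) :=
      Metric.dist_le_diam_of_mem isCompact_univ.isBounded (Set.mem_univ _) (Set.mem_univ _)
    show ‖dist y y'‖ ≤ _
    rw [Real.norm_eq_abs, abs_of_nonneg dist_nonneg]
    linarith

/-- The Kuratowski-type embedding of `𝒳` into bounded functions on the disjoint union. -/
noncomputable def kurF (h𝒳 : 𝒳.IsCompactPMM) (hδ : Adm 𝒳 𝒴 δ M) (x : 𝒳.carrier) :
    (𝒳.carrier ⊕ 𝒴.carrier) →ᵇ ℝ :=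
  BoundedContinuousFunction.ofNormedAddCommGroup (kurFraw δ x) (kurFraw_cont hδ x)
    _ (kurFraw_bound h𝒳 hδ x)

/-- The Kuratowski-type embedding of `𝒴` into bounded functions on the disjoint union. -/
noncomputable def kurG (h𝒴 : 𝒴.IsCompactPMM) (hδ : Adm 𝒳 𝒴 δ M) (y : 𝒴.carrier) :
    (𝒳.carrier ⊕ 𝒴.carrier) →ᵇ ℝ :=
  BoundedContinuousFunction.ofNormedAddCommGroup (kurGraw δ y) (kurGraw_cont hδ y)
    _ (kurGraw_bound h𝒴 hδ y)

lemma kur_dist_ff (h𝒳 : 𝒳.IsCompactPMM) (hδ : Adm 𝒳 𝒴 δ M) (x x' : 𝒳.carrier) :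
    dist (kurF h𝒳 hδ x) (kurF h𝒳 hδ x') = dist x x' := by
  refine le_antisymm ((BoundedContinuousFunction.dist_le dist_nonneg).2 fun w => ?_) ?_
  · rcases w with x'' | y
    · show dist (dist x x'') (dist x' x'') ≤ dist x x'
      rw [Real.dist_eq]
      exact abs_dist_sub_le x x' x''
    · show dist (δ (x, y)) (δ (x', y)) ≤ dist x x'
      rw [Real.dist_eq]
      exact hδ.2.1 x x' y
  · calc dist x x' = dist (kurF h𝒳 hδ x (Sum.inl x')) (kurF h𝒳 hδ x' (Sum.inl x')) := by
          show dist x x' = dist (dist x x') (dist x' x')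
          simp [Real.dist_eq, abs_of_nonneg dist_nonneg]
      _ ≤ _ := BoundedContinuousFunction.dist_coe_le_dist _

lemma kur_dist_gg (h𝒴 : 𝒴.IsCompactPMM) (hδ : Adm 𝒳 𝒴 δ M) (y y' : 𝒴.carrier) :
    dist (kurG h𝒴 hδ y) (kurG h𝒴 hδ y') = dist y y' := by
  refine le_antisymm ((BoundedContinuousFunction.dist_le dist_nonneg).2 fun w => ?_) ?_
  · rcases w with x | y''
    · show dist (δ (x, y)) (δ (x, y')) ≤ dist y y'
      rw [Real.dist_eq]
      exact hδ.2.2.1 x y y'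
    · show dist (dist y y'') (dist y' y'') ≤ dist y y'
      rw [Real.dist_eq]
      exact abs_dist_sub_le y y' y''
  · calc dist y y' = dist (kurG h𝒴 hδ y (Sum.inr y')) (kurG h𝒴 hδ y' (Sum.inr y')) := by
          show dist y y' = dist (dist y y') (dist y' y')
          simp [Real.dist_eq, abs_of_nonneg dist_nonneg]
      _ ≤ _ := BoundedContinuousFunction.dist_coe_le_dist _

lemma kur_dist_fg (h𝒳 : 𝒳.IsCompactPMM) (h𝒴 : 𝒴.IsCompactPMM) (hδ : Adm 𝒳 𝒴 δ M)
    (x : 𝒳.carrier) (y : 𝒴.carrier) :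
    dist (kurF h𝒳 hδ x) (kurG h𝒴 hδ y) = δ (x, y) := by
  refine le_antisymm ((BoundedContinuousFunction.dist_le (hδ.1 (x, y)).1).2 fun w => ?_) ?_
  · rcases w with x' | y'
    · show dist (dist x x') (δ (x', y)) ≤ δ (x, y)
      rw [Real.dist_eq, abs_sub_le_iff]
      constructor
      · linarith [hδ.2.2.2.1 x x' y]
      · linarith [abs_le.1 (hδ.2.1 x x' y)]
    · show dist (δ (x, y')) (dist y y') ≤ δ (x, y)
      rw [Real.dist_eq, abs_sub_le_iff]
      constructor
      · linarith [abs_le.1 (hδ.2.2.1 x y y')]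
      · linarith [hδ.2.2.2.2 x y y']
  · calc δ (x, y) = dist (kurF h𝒳 hδ x (Sum.inr y)) (kurG h𝒴 hδ y (Sum.inr y)) := by
          show δ (x, y) = dist (δ (x, y)) (dist y y)
          simp [Real.dist_eq, abs_of_nonneg (hδ.1 (x, y)).1]
      _ ≤ _ := BoundedContinuousFunction.dist_coe_le_dist _

/-- The Kuratowski-type embedding. -/
noncomputable def KurEmb (h𝒳 : 𝒳.IsCompactPMM) (h𝒴 : 𝒴.IsCompactPMM)
    (hδ : Adm 𝒳 𝒴 δ M) : GHPEmbedding 𝒳 𝒴 where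
  Z := (𝒳.carrier ⊕ 𝒴.carrier) →ᵇ ℝ
  mZ := inferInstance
  f := kurF h𝒳 hδ
  g := kurG h𝒴 hδ

lemma KurEmb_isometric (h𝒳 : 𝒳.IsCompactPMM) (h𝒴 : 𝒴.IsCompactPMM)
    (hδ : Adm 𝒳 𝒴 δ M) : (KurEmb h𝒳 h𝒴 hδ).IsIsometric :=
  ⟨Isometry.of_dist_eq (kur_dist_ff h𝒳 hδ), Isometry.of_dist_eq (kur_dist_gg h𝒴 hδ)⟩

lemma KurEmb_cross (h𝒳 : 𝒳.IsCompactPMM) (h𝒴 : 𝒴.IsCompactPMM)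
    (hδ : Adm 𝒳 𝒴 δ M) (x : 𝒳.carrier) (y : 𝒴.carrier) :
    dist ((KurEmb h𝒳 h𝒴 hδ).f x) ((KurEmb h𝒳 h𝒴 hδ).g y) = δ (x, y) :=
  kur_dist_fg h𝒳 h𝒴 hδ x y

section Compare

/-- Comparison of Hausdorff distances of ranges for two pairs of maps with comparable
cross-distances. -/
lemma haus_le {α β Z Z' : Type*} [MetricSpace α] [MetricSpace β] [MetricSpace Z]
    [MetricSpace Z'] [CompactSpace α] [CompactSpace β] [Nonempty α] [Nonempty β]
    (f : α → Z) (g : β → Z) (f' : α → Z') (g' : β → Z')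
    (hf : Continuous f) (hg : Continuous g) {η : ℝ} (hη : 0 ≤ η)
    (hc : ∀ x y, dist (f' x) (g' y) ≤ dist (f x) (g y) + η) :
    Metric.hausdorffDist (Set.range f') (Set.range g') ≤
      Metric.hausdorffDist (Set.range f) (Set.range g) + η := by
  have hfc : IsCompact (Set.range f) := isCompact_range hf
  have hgc : IsCompact (Set.range g) := isCompact_range hg
  have hnef : (Set.range f).Nonempty := Set.range_nonempty f
  have hneg : (Set.range g).Nonempty := Set.range_nonempty g
  have hfin : EMetric.hausdorffEdist (Set.range f) (Set.range g) ≠ ⊤ :=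
    Metric.hausdorffEdist_ne_top_of_nonempty_of_bounded hnef hneg hfc.isBounded hgc.isBounded
  refine Metric.hausdorffDist_le_of_mem_dist
    (add_nonneg Metric.hausdorffDist_nonneg hη) ?_ ?_
  · rintro _ ⟨x, rfl⟩
    obtain ⟨z, hz, hzd⟩ := hgc.exists_infDist_eq_dist hneg (f x)
    obtain ⟨y, rfl⟩ := hz
    refine ⟨g' y, Set.mem_range_self y, ?_⟩
    have h1 : dist (f x) (g y) ≤ Metric.hausdorffDist (Set.range f) (Set.range g) := by
      rw [← hzd]
      exact Metric.infDist_le_hausdorffDist_of_mem (Set.mem_range_self x) hfin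
    linarith [hc x y]
  · rintro _ ⟨y, rfl⟩
    obtain ⟨z, hz, hzd⟩ := hfc.exists_infDist_eq_dist hnef (g y)
    obtain ⟨x, rfl⟩ := hz
    refine ⟨f' x, Set.mem_range_self x, ?_⟩
    have h1 : dist (g y) (f x) ≤ Metric.hausdorffDist (Set.range g) (Set.range f) := by
      rw [← hzd]
      exact Metric.infDist_le_hausdorffDist_of_mem (Set.mem_range_self y)
        (by rw [EMetric.hausdorffEdist_comm]; exact hfin)
    have h2 := hc x y
    rw [dist_comm (g y) (f x)] at h1
    rw [Metric.hausdorffDist_comm] at h1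
    have h4 : dist (g' y) (f' x) = dist (f' x) (g' y) := dist_comm _ _
    linarith

/-- One clause of the Prokhorov comparison. -/
lemma prokh_clause {α β Z Z' : Type*} [MetricSpace α] [MetricSpace β]
    [MetricSpace Z] [MetricSpace Z'] [MeasurableSpace α] [BorelSpace α]
    [MeasurableSpace β] [BorelSpace β] [MeasurableSpace Z] [BorelSpace Z]
    [MeasurableSpace Z'] [BorelSpace Z']
    (μ : Measure α) (ν : Measure β) (f : α → Z) (g : β → Z) (f' : α → Z') (g' : β → Z')
    (hf : Continuous f) (hg : Continuous g) (hf' : Continuous f') (hg' : Continuous g')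
    {ε η : ℝ} (hε0 : 0 < ε) (hη : 0 ≤ η)
    (hc : ∀ x y, dist (f' x) (g' y) ≤ dist (f x) (g y) + η)
    (hcond : ∀ C : Set Z, IsClosed C →
      μ.map f C ≤ ν.map g (Metric.cthickening ε C) + ENNReal.ofReal ε)
    (A : Set Z') (hA : IsClosed A) :
    μ.map f' A ≤ ν.map g' (Metric.cthickening (ε + η) A) + ENNReal.ofReal (ε + η) := by
  rw [Measure.map_apply hf'.measurable hA.measurableSet,
    Measure.map_apply hg'.measurable Metric.isClosed_cthickening.measurableSet]
  rcases (f' ⁻¹' A).eq_empty_or_nonempty with hP | ⟨x₀, hx₀⟩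
  · rw [hP]
    simp
  · set B := closure (f '' (f' ⁻¹' A)) with hB
    have hBclosed : IsClosed B := isClosed_closure
    have h1 := hcond B hBclosed
    rw [Measure.map_apply hf.measurable hBclosed.measurableSet,
      Measure.map_apply hg.measurable Metric.isClosed_cthickening.measurableSet] at h1
    have hsub : g ⁻¹' Metric.cthickening ε B ⊆ g' ⁻¹' Metric.cthickening (ε + η) A := by
      intro y hy
      have h2 : EMetric.infEdist (g y) B ≤ ENNReal.ofReal ε := Metric.mem_cthickening_iff.1 hy
      have hPne : (f '' (f' ⁻¹' A)).Nonempty := ⟨f x₀, Set.mem_image_of_mem f hx₀⟩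
      have h3 : Metric.infDist (g y) (f '' (f' ⁻¹' A)) ≤ ε := by
        have h4 : Metric.infDist (g y) B ≤ ε :=
          ENNReal.toReal_le_of_le_ofReal hε0.le h2
        rwa [hB, Metric.infDist_closure] at h4
      have h5 : Metric.infDist (g' y) A ≤ ε + η := by
        refine le_of_forall_pos_le_add fun t ht => ?_
        have h6 : Metric.infDist (g y) (f '' (f' ⁻¹' A)) < ε + t := by linarith
        obtain ⟨z, hz, hzd⟩ := (Metric.infDist_lt_iff hPne).1 h6
        obtain ⟨x, hxP, rfl⟩ := hz
        have h7 : Metric.infDist (g' y) A ≤ dist (g' y) (f' x) :=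
          Metric.infDist_le_dist_of_mem hxP
        have h8 := hc x y
        rw [dist_comm (g' y) (f' x)] at h7
        rw [dist_comm (g y) (f x)] at hzd
        linarith
      rw [Set.mem_preimage, Metric.mem_cthickening_iff]
      have hAne : A.Nonempty := ⟨f' x₀, hx₀⟩
      have h9 : EMetric.infEdist (g' y) A ≠ ⊤ := Metric.infEdist_ne_top hAne
      exact (ENNReal.le_ofReal_iff_toReal_le h9 (by linarith)).2 h5
    calc μ (f' ⁻¹' A) ≤ μ (f ⁻¹' B) :=
          measure_mono fun x hx => subset_closure (Set.mem_image_of_mem f hx)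
      _ ≤ ν (g ⁻¹' Metric.cthickening ε B) + ENNReal.ofReal ε := h1
      _ ≤ ν (g' ⁻¹' Metric.cthickening (ε + η) A) + ENNReal.ofReal (ε + η) :=
          add_le_add (measure_mono hsub) (ENNReal.ofReal_le_ofReal (by linarith))

lemma prokh_set_nonempty {Z : Type*} [MetricSpace Z] [MeasurableSpace Z]
    (μ ν : Measure Z) (hμ : μ Set.univ ≠ ⊤) (hν : ν Set.univ ≠ ⊤) :
    {ε : ℝ | 0 < ε ∧ ∀ A : Set Z, IsClosed A →
      μ A ≤ ν (Metric.cthickening ε A) + ENNReal.ofReal ε ∧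
      ν A ≤ μ (Metric.cthickening ε A) + ENNReal.ofReal ε}.Nonempty := by
  have h0μ : (0:ℝ) ≤ (μ Set.univ).toReal := ENNReal.toReal_nonneg
  have h0ν : (0:ℝ) ≤ (ν Set.univ).toReal := ENNReal.toReal_nonneg
  refine ⟨(μ Set.univ).toReal + (ν Set.univ).toReal + 1, by linarith, fun A hA => ⟨?_, ?_⟩⟩
  · calc μ A ≤ μ Set.univ := measure_mono (Set.subset_univ A)
      _ = ENNReal.ofReal (μ Set.univ).toReal := (ENNReal.ofReal_toReal hμ).symm
      _ ≤ ENNReal.ofReal ((μ Set.univ).toReal + (ν Set.univ).toReal + 1) :=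
          ENNReal.ofReal_le_ofReal (by linarith)
      _ ≤ _ := self_le_add_left _ _
  · calc ν A ≤ ν Set.univ := measure_mono (Set.subset_univ A)
      _ = ENNReal.ofReal (ν Set.univ).toReal := (ENNReal.ofReal_toReal hν).symm
      _ ≤ ENNReal.ofReal ((μ Set.univ).toReal + (ν Set.univ).toReal + 1) :=
          ENNReal.ofReal_le_ofReal (by linarith)
      _ ≤ _ := self_le_add_left _ _

/-- Comparison of Prokhorov distances for two pairs of maps with comparable cross-distances. -/
lemma prokh_le {α β Z Z' : Type*} [MetricSpace α] [MetricSpace β]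
    [MetricSpace Z] [MetricSpace Z'] [MeasurableSpace α] [BorelSpace α]
    [MeasurableSpace β] [BorelSpace β] [MeasurableSpace Z] [BorelSpace Z]
    [MeasurableSpace Z'] [BorelSpace Z']
    (μ : Measure α) (ν : Measure β) (hμ : μ Set.univ ≠ ⊤) (hν : ν Set.univ ≠ ⊤)
    (f : α → Z) (g : β → Z) (f' : α → Z') (g' : β → Z')
    (hf : Continuous f) (hg : Continuous g) (hf' : Continuous f') (hg' : Continuous g')
    {η : ℝ} (hη : 0 ≤ η)
    (hc : ∀ x y, dist (f' x) (g' y) ≤ dist (f x) (g y) + η) :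
    prokhorovDist (μ.map f') (ν.map g') ≤ prokhorovDist (μ.map f) (ν.map g) + η := by
  have hμ' : μ.map f Set.univ ≠ ⊤ := by
    rw [Measure.map_apply hf.measurable MeasurableSet.univ, Set.preimage_univ]; exact hμ
  have hν' : ν.map g Set.univ ≠ ⊤ := by
    rw [Measure.map_apply hg.measurable MeasurableSet.univ, Set.preimage_univ]; exact hν
  set S : Set ℝ := {ε : ℝ | 0 < ε ∧ ∀ A : Set Z, IsClosed A →
      μ.map f A ≤ ν.map g (Metric.cthickening ε A) + ENNReal.ofReal ε ∧
      ν.map g A ≤ μ.map f (Metric.cthickening ε A) + ENNReal.ofReal ε} with hSdef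
  set S' : Set ℝ := {ε : ℝ | 0 < ε ∧ ∀ A : Set Z', IsClosed A →
      μ.map f' A ≤ ν.map g' (Metric.cthickening ε A) + ENNReal.ofReal ε ∧
      ν.map g' A ≤ μ.map f' (Metric.cthickening ε A) + ENNReal.ofReal ε} with hS'def
  have hP : prokhorovDist (μ.map f) (ν.map g) = sInf S := rfl
  have hP' : prokhorovDist (μ.map f') (ν.map g') = sInf S' := rfl
  have hSne : S.Nonempty := prokh_set_nonempty (μ.map f) (ν.map g) hμ' hν'
  have key : ∀ ε ∈ S, ε + η ∈ S' := by
    rintro ε ⟨hε0, hcond⟩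
    refine ⟨by linarith, fun A hA => ⟨?_, ?_⟩⟩
    · exact prokh_clause μ ν f g f' g' hf hg hf' hg' hε0 hη hc
        (fun C hC => (hcond C hC).1) A hA
    · exact prokh_clause ν μ g f g' f' hg hf hg' hf' hε0 hη
        (fun y x => by rw [dist_comm (g' y) (f' x), dist_comm (g y) (f x)]; exact hc x y)
        (fun C hC => (hcond C hC).2) A hA
  have hbdd' : BddBelow S' := ⟨0, fun x hx => hx.1.le⟩
  have h1 : ∀ ε ∈ S, sInf S' ≤ ε + η := fun ε hε => csInf_le hbdd' (key ε hε)
  have h2 : sInf S' - η ≤ sInf S := le_csInf hSne fun ε hε => by linarith [h1 ε hε]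
  rw [hP, hP']
  linarith

end Compare

/-- Monotonicity of the value of an embedding pair under comparison of cross-distances. -/
lemma value_le {𝒳 𝒴 : PMM} (h𝒳 : 𝒳.IsCompactPMM) (h𝒴 : 𝒴.IsCompactPMM)
    (e e' : GHPEmbedding 𝒳 𝒴) (he : e.IsIsometric) (he' : e'.IsIsometric)
    {η : ℝ} (hη : 0 ≤ η)
    (hc : ∀ x y, dist (e'.f x) (e'.g y) ≤ dist (e.f x) (e.g y) + η) :
    e'.value ≤ e.value + η := by
  haveI : CompactSpace 𝒳.carrier := h𝒳.1
  haveI : CompactSpace 𝒴.carrier := h𝒴.1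
  haveI : Nonempty 𝒳.carrier := ⟨𝒳.basepoint⟩
  haveI : Nonempty 𝒴.carrier := ⟨𝒴.basepoint⟩
  letI : MeasurableSpace e.Z := borel e.Z
  haveI : BorelSpace e.Z := ⟨rfl⟩
  letI : MeasurableSpace e'.Z := borel e'.Z
  haveI : BorelSpace e'.Z := ⟨rfl⟩
  rw [value_eq' e, value_eq' e']
  have hB : Metric.hausdorffDist (Set.range e'.f) (Set.range e'.g) ≤
      Metric.hausdorffDist (Set.range e.f) (Set.range e.g) + η :=
    haus_le e.f e.g e'.f e'.g he.1.continuous he.2.continuous hη hc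
  have hC : prokhorovDist (𝒳.meas.map e'.f) (𝒴.meas.map e'.g) ≤
      prokhorovDist (𝒳.meas.map e.f) (𝒴.meas.map e.g) + η :=
    prokh_le 𝒳.meas 𝒴.meas h𝒳.2 h𝒴.2 e.f e.g e'.f e'.g
      he.1.continuous he.2.continuous he'.1.continuous he'.2.continuous hη hc
  refine le_trans (max_le_max (hc 𝒳.basepoint 𝒴.basepoint) (max_le_max hB hC)) (le_of_eq ?_)
  rw [max_add_add_right, max_add_add_right]

end CGHPAux

/-- For compact pmm spaces, the infimum defining the Gromov-Hausdorff-Prokhorov distance is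
attained: there are a metric space `Z` and isometric embeddings `f`, `g` of `𝒳`, `𝒴` into `Z`
with `max(d(f o_X, g o_Y), dH(f(X), g(Y)), dP(f_*μ_X, g_*μ_Y)) = dc(𝒳,𝒴)`. -/
theorem cGHP_attained (𝒳 𝒴 : PMM) (h𝒳 : 𝒳.IsCompactPMM) (h𝒴 : 𝒴.IsCompactPMM) :
    ∃ e : GHPEmbedding 𝒳 𝒴, e.IsIsometric ∧ e.value = cGHP 𝒳 𝒴 := by
  classical
  haveI : CompactSpace 𝒳.carrier := h𝒳.1
  haveI : CompactSpace 𝒴.carrier := h𝒴.1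
  haveI : Nonempty 𝒳.carrier := ⟨𝒳.basepoint⟩
  haveI : Nonempty 𝒴.carrier := ⟨𝒴.basepoint⟩
  set S : Set ℝ := {x : ℝ | ∃ e : GHPEmbedding 𝒳 𝒴, e.IsIsometric ∧ x = e.value} with hSdef
  have hcGHP : cGHP 𝒳 𝒴 = sInf S := rfl
  have hSbdd : BddBelow S := ⟨0, by rintro v ⟨e, he, rfl⟩; exact CGHPAux.value_nonneg e⟩
  have hcGHP0 : 0 ≤ cGHP 𝒳 𝒴 := by
    rw [hcGHP]
    exact Real.sInf_nonneg fun v hv => by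
      obtain ⟨e, he, rfl⟩ := hv; exact CGHPAux.value_nonneg e
  have hdX : 0 ≤ Metric.diam (Set.univ : Set 𝒳.carrier) := Metric.diam_nonneg
  have hdY : 0 ≤ Metric.diam (Set.univ : Set 𝒴.carrier) := Metric.diam_nonneg
  set M : ℝ := Metric.diam (Set.univ : Set 𝒳.carrier)
      + Metric.diam (Set.univ : Set 𝒴.carrier) + cGHP 𝒳 𝒴 + 1 with hMdef
  -- a first admissible function
  have hδ₀cont : Continuous (fun p : 𝒳.carrier × 𝒴.carrier =>
      dist p.1 𝒳.basepoint + dist p.2 𝒴.basepoint) :=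
    ((continuous_fst.dist continuous_const).add (continuous_snd.dist continuous_const))
  set δ₀ : (𝒳.carrier × 𝒴.carrier) →ᵇ ℝ :=
    BoundedContinuousFunction.mkOfCompact ⟨_, hδ₀cont⟩ with hδ₀def
  have hδ₀app : ∀ p : 𝒳.carrier × 𝒴.carrier,
      δ₀ p = dist p.1 𝒳.basepoint + dist p.2 𝒴.basepoint := fun p => rfl
  have hδ₀Adm : CGHPAux.Adm 𝒳 𝒴 ⇑δ₀ M := by
    refine ⟨fun p => ⟨?_, ?_⟩, fun x x' y => ?_, fun x y y' => ?_, fun x x' y => ?_,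
      fun x y y' => ?_⟩
    · rw [hδ₀app]; positivity
    · rw [hδ₀app]
      have h1 : dist p.1 𝒳.basepoint ≤ Metric.diam (Set.univ : Set 𝒳.carrier) :=
        Metric.dist_le_diam_of_mem isCompact_univ.isBounded (Set.mem_univ _) (Set.mem_univ _)
      have h2 : dist p.2 𝒴.basepoint ≤ Metric.diam (Set.univ : Set 𝒴.carrier) :=
        Metric.dist_le_diam_of_mem isCompact_univ.isBounded (Set.mem_univ _) (Set.mem_univ _)
      rw [hMdef]; linarith
    · rw [hδ₀app, hδ₀app]
      simpa using abs_dist_sub_le x x' 𝒳.basepoint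
    · rw [hδ₀app, hδ₀app]
      simpa using abs_dist_sub_le y y' 𝒴.basepoint
    · rw [hδ₀app, hδ₀app]
      have := dist_triangle x 𝒳.basepoint x'
      have h2 : dist 𝒳.basepoint x' = dist x' 𝒳.basepoint := dist_comm _ _
      have : (0:ℝ) ≤ dist y 𝒴.basepoint := dist_nonneg
      linarith [dist_triangle x 𝒳.basepoint x', dist_comm 𝒳.basepoint x']
    · rw [hδ₀app, hδ₀app]
      have : (0:ℝ) ≤ dist x 𝒳.basepoint := dist_nonneg
      linarith [dist_triangle y 𝒴.basepoint y', dist_comm 𝒴.basepoint y']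
  set K : Set ((𝒳.carrier × 𝒴.carrier) →ᵇ ℝ) := {F | CGHPAux.Adm 𝒳 𝒴 ⇑F M} with hKdef
  have hev : ∀ p : 𝒳.carrier × 𝒴.carrier,
      Continuous (fun F : (𝒳.carrier × 𝒴.carrier) →ᵇ ℝ => F p) :=
    fun p => continuous_eval_const p
  have hKclosed : IsClosed K := by
    have hKeq : K = (⋂ p : 𝒳.carrier × 𝒴.carrier, {F : (𝒳.carrier × 𝒴.carrier) →ᵇ ℝ |
          0 ≤ F p ∧ F p ≤ M}) ∩
        ((⋂ x, ⋂ x', ⋂ y, {F : (𝒳.carrier × 𝒴.carrier) →ᵇ ℝ |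
          |F (x, y) - F (x', y)| ≤ dist x x'}) ∩
        ((⋂ x, ⋂ y, ⋂ y', {F : (𝒳.carrier × 𝒴.carrier) →ᵇ ℝ |
          |F (x, y) - F (x, y')| ≤ dist y y'}) ∩
        ((⋂ x, ⋂ x', ⋂ y, {F : (𝒳.carrier × 𝒴.carrier) →ᵇ ℝ |
          dist x x' ≤ F (x, y) + F (x', y)}) ∩
        (⋂ x, ⋂ y, ⋂ y', {F : (𝒳.carrier × 𝒴.carrier) →ᵇ ℝ |
          dist y y' ≤ F (x, y) + F (x, y')})))) := by
      ext F
      simp only [hKdef, CGHPAux.Adm, Set.mem_setOf_eq, Set.mem_inter_iff, Set.mem_iInter]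
    rw [hKeq]
    refine IsClosed.inter (isClosed_iInter fun p =>
        IsClosed.inter (isClosed_le continuous_const (hev p))
          (isClosed_le (hev p) continuous_const))
      (IsClosed.inter (isClosed_iInter fun x => isClosed_iInter fun x' =>
          isClosed_iInter fun y =>
          isClosed_le (((hev (x, y)).sub (hev (x', y))).abs) continuous_const)
      (IsClosed.inter (isClosed_iInter fun x => isClosed_iInter fun y =>
          isClosed_iInter fun y' =>
          isClosed_le (((hev (x, y)).sub (hev (x, y'))).abs) continuous_const)
      (IsClosed.inter (isClosed_iInter fun x => isClosed_iInter fun x' =>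
          isClosed_iInter fun y =>
          isClosed_le continuous_const ((hev (x, y)).add (hev (x', y))))
        (isClosed_iInter fun x => isClosed_iInter fun y => isClosed_iInter fun y' =>
          isClosed_le continuous_const ((hev (x, y)).add (hev (x, y')))))))
  have hKcompact : IsCompact K := by
    refine BoundedContinuousFunction.arzela_ascoli₂ (Set.Icc 0 M) isCompact_Icc K hKclosed
      (fun F p hF => ⟨(hF.1 p).1, (hF.1 p).2⟩) ?_
    intro p
    rw [Metric.equicontinuousAt_iff]
    intro ε hε
    refine ⟨ε / 2, by positivity, fun q hq i => ?_⟩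
    obtain ⟨F, hF⟩ := i
    show dist (F p) (F q) < ε
    rw [dist_comm]
    have h1 := hF.2.1 q.1 p.1 q.2
    have h2 := hF.2.2.1 p.1 q.2 p.2
    simp only [Prod.mk.eta] at h1 h2
    have hq1 : dist q.1 p.1 ≤ dist q p := by
      rw [Prod.dist_eq]; exact le_max_left _ _
    have hq2 : dist q.2 p.2 ≤ dist q p := by
      rw [Prod.dist_eq]; exact le_max_right _ _
    have h3 : dist (F q) (F p) ≤ 2 * dist q p := by
      rw [Real.dist_eq]
      calc |F q - F p| ≤ |F q - F (p.1, q.2)| + |F (p.1, q.2) - F p| := abs_sub_le _ _ _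
        _ ≤ dist q.1 p.1 + dist q.2 p.2 := add_le_add h1 h2
        _ ≤ 2 * dist q p := by linarith
    calc dist (F q) (F p) ≤ 2 * dist q p := h3
      _ < 2 * (ε / 2) := by linarith
      _ = ε := by ring
  set V : ((𝒳.carrier × 𝒴.carrier) →ᵇ ℝ) → ℝ := fun F =>
    if h : CGHPAux.Adm 𝒳 𝒴 ⇑F M then (CGHPAux.KurEmb h𝒳 h𝒴 h).value else 0 with hVdef
  have hVK : ∀ (F : (𝒳.carrier × 𝒴.carrier) →ᵇ ℝ) (h : CGHPAux.Adm 𝒳 𝒴 ⇑F M),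
      V F = (CGHPAux.KurEmb h𝒳 h𝒴 h).value := by
    intro F h
    rw [hVdef]
    exact dif_pos h
  have hVdiff : ∀ F ∈ K, ∀ G ∈ K, V G ≤ V F + dist F G := by
    intro F hF G hG
    rw [hVK F hF, hVK G hG]
    refine CGHPAux.value_le h𝒳 h𝒴 _ _ (CGHPAux.KurEmb_isometric h𝒳 h𝒴 hF)
      (CGHPAux.KurEmb_isometric h𝒳 h𝒴 hG) dist_nonneg ?_
    intro x y
    rw [CGHPAux.KurEmb_cross h𝒳 h𝒴 hG x y, CGHPAux.KurEmb_cross h𝒳 h𝒴 hF x y]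
    have h1 := BoundedContinuousFunction.dist_coe_le_dist (f := F) (g := G) (x, y)
    rw [Real.dist_eq] at h1
    linarith [abs_le.1 h1]
  have hVcont : ContinuousOn V K := by
    refine LipschitzOnWith.continuousOn (K := 1) ?_
    rw [lipschitzOnWith_iff_dist_le_mul]
    intro F hF G hG
    rw [Real.dist_eq, NNReal.coe_one, one_mul, abs_sub_le_iff]
    constructor
    · have := hVdiff G hG F hF
      rw [dist_comm G F] at this
      linarith
    · linarith [hVdiff F hF G hG]
  have hKne : K.Nonempty := ⟨δ₀, hδ₀Adm⟩
  obtain ⟨F₀, hF₀K, hF₀min⟩ := hKcompact.exists_isMinOn hKne hVcont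
  have hF₀Adm : CGHPAux.Adm 𝒳 𝒴 ⇑F₀ M := hF₀K
  set e₀ := CGHPAux.KurEmb h𝒳 h𝒴 hF₀Adm with he₀def
  have he₀iso : e₀.IsIsometric := CGHPAux.KurEmb_isometric h𝒳 h𝒴 hF₀Adm
  refine ⟨e₀, he₀iso, ?_⟩
  have he₀S : e₀.value ∈ S := ⟨e₀, he₀iso, rfl⟩
  have hge : cGHP 𝒳 𝒴 ≤ e₀.value := by
    rw [hcGHP]; exact csInf_le hSbdd he₀S
  have hle : e₀.value ≤ cGHP 𝒳 𝒴 := by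
    by_contra hlt
    push_neg at hlt
    have hSne : S.Nonempty := ⟨e₀.value, he₀S⟩
    have hlt' : sInf S < min e₀.value (cGHP 𝒳 𝒴 + 1) := by
      rw [← hcGHP]
      exact lt_min hlt (by linarith)
    obtain ⟨v, hvS, hvlt⟩ := exists_lt_of_csInf_lt hSne hlt'
    obtain ⟨e, he, rfl⟩ := hvS
    have hv1 : e.value < e₀.value := lt_of_lt_of_le hvlt (min_le_left _ _)
    have hv2 : e.value < cGHP 𝒳 𝒴 + 1 := lt_of_lt_of_le hvlt (min_le_right _ _)
    have hδecont : Continuous (fun p : 𝒳.carrier × 𝒴.carrier => dist (e.f p.1) (e.g p.2)) :=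
      ((he.1.continuous.comp continuous_fst).dist (he.2.continuous.comp continuous_snd))
    set δe : (𝒳.carrier × 𝒴.carrier) →ᵇ ℝ :=
      BoundedContinuousFunction.mkOfCompact ⟨_, hδecont⟩ with hδedef
    have hδeapp : ∀ p : 𝒳.carrier × 𝒴.carrier, δe p = dist (e.f p.1) (e.g p.2) := fun p => rfl
    have hbase : dist (e.f 𝒳.basepoint) (e.g 𝒴.basepoint) ≤ e.value := by
      rw [CGHPAux.value_eq' e]
      exact le_max_left _ _
    have hδeAdm : CGHPAux.Adm 𝒳 𝒴 ⇑δe M := by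
      refine ⟨fun p => ⟨by rw [hδeapp]; exact dist_nonneg, ?_⟩, fun x x' y => ?_,
        fun x y y' => ?_, fun x x' y => ?_, fun x y y' => ?_⟩
      · rw [hδeapp]
        have h1 : dist (e.f p.1) (e.g p.2) ≤ dist (e.f p.1) (e.f 𝒳.basepoint)
            + dist (e.f 𝒳.basepoint) (e.g 𝒴.basepoint)
            + dist (e.g 𝒴.basepoint) (e.g p.2) := dist_triangle4 _ _ _ _
        rw [he.1.dist_eq, he.2.dist_eq] at h1
        have h2 : dist p.1 𝒳.basepoint ≤ Metric.diam (Set.univ : Set 𝒳.carrier) :=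
          Metric.dist_le_diam_of_mem isCompact_univ.isBounded (Set.mem_univ _) (Set.mem_univ _)
        have h3 : dist 𝒴.basepoint p.2 ≤ Metric.diam (Set.univ : Set 𝒴.carrier) :=
          Metric.dist_le_diam_of_mem isCompact_univ.isBounded (Set.mem_univ _) (Set.mem_univ _)
        rw [hMdef]
        linarith
      · rw [hδeapp, hδeapp]
        have := abs_dist_sub_le (e.f x) (e.f x') (e.g y)
        rw [he.1.dist_eq] at this
        simpa using this
      · rw [hδeapp, hδeapp]
        have h1 : |dist (e.g y) (e.f x) - dist (e.g y') (e.f x)| ≤ dist (e.g y) (e.g y') :=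
          abs_dist_sub_le _ _ _
        rw [he.2.dist_eq, dist_comm (e.g y) (e.f x), dist_comm (e.g y') (e.f x)] at h1
        simpa using h1
      · rw [hδeapp, hδeapp]
        have h1 : dist (e.f x) (e.f x') ≤ dist (e.f x) (e.g y) + dist (e.g y) (e.f x') :=
          dist_triangle _ _ _
        rw [he.1.dist_eq, dist_comm (e.g y) (e.f x')] at h1
        simpa using h1
      · rw [hδeapp, hδeapp]
        have h1 : dist (e.g y) (e.g y') ≤ dist (e.g y) (e.f x) + dist (e.f x) (e.g y') :=
          dist_triangle _ _ _
        rw [he.2.dist_eq, dist_comm (e.g y) (e.f x)] at h1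
        simpa using h1
    have h1 : V δe ≤ e.value := by
      rw [hVK δe hδeAdm]
      have := CGHPAux.value_le h𝒳 h𝒴 e (CGHPAux.KurEmb h𝒳 h𝒴 hδeAdm) he
        (CGHPAux.KurEmb_isometric h𝒳 h𝒴 hδeAdm) le_rfl ?_
      · simpa using this
      · intro x y
        rw [CGHPAux.KurEmb_cross h𝒳 h𝒴 hδeAdm x y, hδeapp]
        simp
    have h2 : V F₀ ≤ V δe := hF₀min hδeAdm
    have h3 : V F₀ = e₀.value := hVK F₀ hF₀Adm
    linarith
  exact le_antisymm hle hge

end
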